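/- Let K be a bounded, C_0, characteristic kernel on ℝ^d, f an entropy function such that 1 is the unique minimizer of f, and λ > 0. Then the MMD-regularized f-divergence is a divergence: for all μ, ν ∈ M_+(ℝ^d), D^λ_f(μ|ν) ≥ 0, and D^λ_f(μ|ν) = 0 if and only if μ = ν. -/

import Mathlib

open MeasureTheory ENNReal Filter Topology Set
open scoped ZeroAtInfty RealInnerProductSpace BoundedContinuousFunction

noncomputable section

/-- Euclidean space `ℝ^d`. -/
abbrev Rd (d : ℕ) : Type := EuclideanSpace ℝ (Fin d)

/-- An entropy function: a proper, convex, lower semicontinuous `f : ℝ → [0,∞]`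
with `f x = ∞` for `x < 0` and `f 1 = 0` (properness is automatic from `f 1 = 0`). -/
structure IsEntropy (f : ℝ → ℝ≥0∞) : Prop where
  convex : ∀ x y a b : ℝ, 0 ≤ a → 0 ≤ b → a + b = 1 →
    f (a * x + b * y) ≤ ENNReal.ofReal a * f x + ENNReal.ofReal b * f y
  lsc : LowerSemicontinuous f
  top_of_neg : ∀ x : ℝ, x < 0 → f x = ⊤
  one_eq_zero : f 1 = 0

/-- `1` is the unique minimizer of the entropy function `f`, i.e. `f t > 0` for `t ≠ 1`. -/
def UniqueMinOne (f : ℝ → ℝ≥0∞) : Prop := ∀ t : ℝ, t ≠ 1 → 0 < f t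

/-- The recession constant `f'_∞ = lim_{t → ∞} f t / t` (the limit exists for convex `f`,
so it coincides with the `limsup`). -/
noncomputable def recession (f : ℝ → ℝ≥0∞) : ℝ≥0∞ :=
  Filter.limsup (fun t : ℝ => f t / ENNReal.ofReal t) Filter.atTop

/-- The `f`-divergence of finite nonnegative measures:
`D_f(μ|ν) = ∫ f(dμ/dν) dν + f'_∞ · μˢ(ℝ^d)` where `μ = (dμ/dν) ν + μˢ`
is the Lebesgue decomposition of `μ` w.r.t. `ν` (convention `0 ⬝ ∞ = 0`). -/
noncomputable def fDiv {d : ℕ} (f : ℝ → ℝ≥0∞) (μ ν : Measure (Rd d)) : ℝ≥0∞ :=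
  ∫⁻ x, f ((μ.rnDeriv ν x).toReal) ∂ν + recession f * μ.singularPart ν Set.univ

/-- A kernel on `ℝ^d`: symmetric, positive definite, bounded, and with
`K x · ∈ C₀(ℝ^d)` for every `x`. -/
structure IsKernel {d : ℕ} (K : Rd d → Rd d → ℝ) : Prop where
  symm : ∀ x y, K x y = K y x
  posdef : ∀ (n : ℕ) (x : Fin n → Rd d) (a : Fin n → ℝ),
    0 ≤ ∑ i, ∑ j, a i * a j * K (x i) (x j)
  bounded : ∃ C : ℝ, ∀ x, K x x ≤ C
  cont : ∀ x, Continuous (K x)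
  zero_at_infty : ∀ x, Tendsto (K x) (Filter.cocompact (Rd d)) (𝓝 0)

/-- Integral of a function against a finite signed measure, via the Jordan decomposition. -/
noncomputable def sIntegral {d : ℕ} (α : SignedMeasure (Rd d)) (g : Rd d → ℝ) : ℝ :=
  ∫ x, g x ∂α.toJordanDecomposition.posPart - ∫ x, g x ∂α.toJordanDecomposition.negPart

/-- Squared MMD of two finite signed measures: `∬ K(x,y) d(α−β)(x) d(α−β)(y)`. -/
noncomputable def mmdSq {d : ℕ} (K : Rd d → Rd d → ℝ) (α β : SignedMeasure (Rd d)) : ℝ :=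
  sIntegral (α - β) (fun x => sIntegral (α - β) (fun y => K x y))

/-- The maximum mean discrepancy `d_K` of two finite signed measures. -/
noncomputable def mmd {d : ℕ} (K : Rd d → Rd d → ℝ) (α β : SignedMeasure (Rd d)) : ℝ :=
  Real.sqrt (mmdSq K α β)

/-- A kernel is characteristic if `d_K(α,β) = 0` implies `α = β` for finite signed
measures `α, β`. -/
def Characteristic {d : ℕ} (K : Rd d → Rd d → ℝ) : Prop :=
  ∀ α β : SignedMeasure (Rd d), mmd K α β = 0 → α = β

/-- Squared MMD of two finite nonnegative measures:
`d_K(α,β)² = ∬K dα dα − 2 ∬K dβ dα + ∬K dβ dβ`. -/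
noncomputable def mmdSqM {d : ℕ} (K : Rd d → Rd d → ℝ) (α β : Measure (Rd d)) : ℝ :=
  (∫ x, (∫ y, K x y ∂α) ∂α) - 2 * (∫ x, (∫ y, K x y ∂β) ∂α) + ∫ x, (∫ y, K x y ∂β) ∂β

/-- The MMD `d_K` of two finite nonnegative measures. -/
noncomputable def mmdM {d : ℕ} (K : Rd d → Rd d → ℝ) (α β : Measure (Rd d)) : ℝ :=
  Real.sqrt (mmdSqM K α β)

/-- The MMD-regularized `f`-divergence `D^λ_{f,ν}(μ)` of a finite nonnegative measure `μ`:
`inf_{σ ∈ M₊} D_f(σ|ν) + (1/(2λ)) d_K(μ,σ)²`. -/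
noncomputable def regFDivM {d : ℕ} (K : Rd d → Rd d → ℝ) (f : ℝ → ℝ≥0∞)
    (ν : Measure (Rd d)) (lam : ℝ) (μ : Measure (Rd d)) : ℝ≥0∞ :=
  ⨅ σ : {σ : Measure (Rd d) // IsFiniteMeasure σ},
    fDiv f σ.1 ν + ENNReal.ofReal (mmdSqM K μ σ.1 / (2 * lam))


section Aux

variable {d : ℕ}

lemma kernel_bd {K : Rd d → Rd d → ℝ} (hK : IsKernel K) :
    ∃ C : ℝ, 0 ≤ C ∧ ∀ x y, |K x y| ≤ C := by
  obtain ⟨C, hC⟩ := hK.bounded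
  refine ⟨max C 0, le_max_right _ _, fun x y => ?_⟩
  have h1 := hK.posdef 2 ![x, y] ![1, 1]
  have h2 := hK.posdef 2 ![x, y] ![1, -1]
  simp [Fin.sum_univ_two] at h1 h2
  have hxy := hK.symm x y
  have hx := hC x; have hy := hC y
  have hCm := le_max_left C (0:ℝ)
  rw [abs_le]
  constructor <;> nlinarith

lemma kernel_sm {K : Rd d → Rd d → ℝ} (hK : IsKernel K) :
    StronglyMeasurable (Function.uncurry K) := by
  apply stronglyMeasurable_uncurry_of_continuous_of_stronglyMeasurable
  · intro y
    have h : (fun x => K x y) = K y := funext fun x => hK.symm x y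
    rw [h]
    exact hK.cont y
  · exact fun x => (hK.cont x).stronglyMeasurable

lemma integrable_bdd {X : Type*} [MeasurableSpace X] {ξ : Measure X} [IsFiniteMeasure ξ] {g : X → ℝ}
    (hg : AEStronglyMeasurable g ξ) {M : ℝ} (hM : ∀ x, |g x| ≤ M) : Integrable g ξ :=
  ⟨hg, HasFiniteIntegral.of_bounded (ae_of_all _ fun x => by simpa using hM x)⟩

end Aux
section Aux2

variable {d : ℕ}

lemma sIntegral_sub_eq (μ ν : Measure (Rd d)) [IsFiniteMeasure μ] [IsFiniteMeasure ν]
    {g : Rd d → ℝ} (hg : StronglyMeasurable g) {M : ℝ} (hM : ∀ x, |g x| ≤ M) :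
    sIntegral (μ.toSignedMeasure - ν.toSignedMeasure) g = ∫ x, g x ∂μ - ∫ x, g x ∂ν := by
  set γ := μ.toSignedMeasure - ν.toSignedMeasure with hγ
  set p := γ.toJordanDecomposition.posPart with hp
  set n := γ.toJordanDecomposition.negPart with hn
  have key : p + ν = μ + n := by
    ext s hs
    have h0 : p.toSignedMeasure - n.toSignedMeasure = μ.toSignedMeasure - ν.toSignedMeasure :=
      γ.toSignedMeasure_toJordanDecomposition
    have h1 := congrArg (fun (m : SignedMeasure (Rd d)) => m s) h0
    simp only [VectorMeasure.sub_apply, Measure.toSignedMeasure_apply_measurable hs, measureReal_def] at h1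
    rw [Measure.add_apply, Measure.add_apply,
      ← ENNReal.toReal_eq_toReal_iff' (by finiteness) (by finiteness),
      ENNReal.toReal_add (by finiteness) (by finiteness),
      ENNReal.toReal_add (by finiteness) (by finiteness)]
    linarith
  have hip : Integrable g p := integrable_bdd hg.aestronglyMeasurable hM
  have hin : Integrable g n := integrable_bdd hg.aestronglyMeasurable hM
  have hiμ : Integrable g μ := integrable_bdd hg.aestronglyMeasurable hM
  have hiν : Integrable g ν := integrable_bdd hg.aestronglyMeasurable hM
  have hsum : ∫ x, g x ∂p + ∫ x, g x ∂ν = ∫ x, g x ∂μ + ∫ x, g x ∂n := by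
    rw [← integral_add_measure hip hiν, ← integral_add_measure hiμ hin, key]
  have hdef : sIntegral γ g = ∫ x, g x ∂p - ∫ x, g x ∂n := rfl
  rw [hdef]; linarith

end Aux2
section Aux3

variable {d : ℕ} {K : Rd d → Rd d → ℝ}

lemma kernel_int_sm (hK : IsKernel K) (β : Measure (Rd d)) [SFinite β] :
    StronglyMeasurable (fun x => ∫ y, K x y ∂β) :=
  (kernel_sm hK).integral_prod_right'

lemma kernel_int_bd (hK : IsKernel K) {C : ℝ} (hCb : ∀ x y, |K x y| ≤ C)
    (β : Measure (Rd d)) [IsFiniteMeasure β] (x : Rd d) :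
    |∫ y, K x y ∂β| ≤ C * (β Set.univ).toReal := by
  have := norm_integral_le_of_norm_le_const (μ := β) (f := fun y => K x y) (C := C)
    (ae_of_all _ fun y => by simpa using hCb x y)
  simpa [measureReal_def] using this

lemma kernel_swap (hK : IsKernel K) {C : ℝ} (hCb : ∀ x y, |K x y| ≤ C)
    (α β : Measure (Rd d)) [IsFiniteMeasure α] [IsFiniteMeasure β] :
    ∫ x, ∫ y, K x y ∂β ∂α = ∫ x, ∫ y, K x y ∂α ∂β := by
  have hint : Integrable (Function.uncurry K) (α.prod β) :=
    integrable_bdd (kernel_sm hK).aestronglyMeasurable (fun p => hCb p.1 p.2)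
  rw [integral_integral_swap hint]
  simp_rw [hK.symm]

lemma mmdSq_eq (hK : IsKernel K) {C : ℝ} (hCb : ∀ x y, |K x y| ≤ C)
    (μ ν : Measure (Rd d)) [IsFiniteMeasure μ] [IsFiniteMeasure ν] :
    mmdSq K μ.toSignedMeasure ν.toSignedMeasure = mmdSqM K μ ν := by
  have hinner : ∀ x, sIntegral (μ.toSignedMeasure - ν.toSignedMeasure) (fun y => K x y)
      = (∫ y, K x y ∂μ) - ∫ y, K x y ∂ν :=
    fun x => sIntegral_sub_eq μ ν (hK.cont x).stronglyMeasurable (hCb x)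
  have houter : mmdSq K μ.toSignedMeasure ν.toSignedMeasure
      = sIntegral (μ.toSignedMeasure - ν.toSignedMeasure)
          (fun x => (∫ y, K x y ∂μ) - ∫ y, K x y ∂ν) := by
    rw [mmdSq]
    congr 1
    exact funext hinner
  have hgm : StronglyMeasurable (fun x => (∫ y, K x y ∂μ) - ∫ y, K x y ∂ν) :=
    (kernel_int_sm hK μ).sub (kernel_int_sm hK ν)
  have hgb : ∀ x, |(∫ y, K x y ∂μ) - ∫ y, K x y ∂ν|
      ≤ C * (μ Set.univ).toReal + C * (ν Set.univ).toReal := fun x =>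
    (abs_sub _ _).trans (add_le_add (kernel_int_bd hK hCb μ x) (kernel_int_bd hK hCb ν x))
  rw [houter, sIntegral_sub_eq μ ν hgm hgb]
  have hiμμ : Integrable (fun x => ∫ y, K x y ∂μ) μ :=
    integrable_bdd (kernel_int_sm hK μ).aestronglyMeasurable (kernel_int_bd hK hCb μ)
  have hiνμ : Integrable (fun x => ∫ y, K x y ∂ν) μ :=
    integrable_bdd (kernel_int_sm hK ν).aestronglyMeasurable (kernel_int_bd hK hCb ν)
  have hiμν : Integrable (fun x => ∫ y, K x y ∂μ) ν :=
    integrable_bdd (kernel_int_sm hK μ).aestronglyMeasurable (kernel_int_bd hK hCb μ)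
  have hiνν : Integrable (fun x => ∫ y, K x y ∂ν) ν :=
    integrable_bdd (kernel_int_sm hK ν).aestronglyMeasurable (kernel_int_bd hK hCb ν)
  rw [integral_sub hiμμ hiνμ, integral_sub hiμν hiνν, mmdSqM]
  have hsw := kernel_swap hK hCb ν μ
  linarith

end Aux3
section Aux4

variable {d : ℕ}

/-- Total-variation style bound on the difference of integrals of a bounded function. -/
lemma integral_sub_le (σ ν : Measure (Rd d)) [IsFiniteMeasure σ] [IsFiniteMeasure ν]
    {g : Rd d → ℝ} (hg : StronglyMeasurable g) {M : ℝ} (hM0 : 0 ≤ M) (hM : ∀ x, |g x| ≤ M) :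
    |∫ x, g x ∂σ - ∫ x, g x ∂ν| ≤
      M * ((∫ x, |(σ.rnDeriv ν x).toReal - 1| ∂ν) + (σ.singularPart ν Set.univ).toReal) := by
  set ρ := σ.rnDeriv ν with hρ
  have hρm : Measurable ρ := Measure.measurable_rnDeriv σ ν
  have hwd : ν.withDensity ρ = ν.withDensity (fun x => ((ρ x).toNNReal : ℝ≥0∞)) :=
    withDensity_congr_ae ((Measure.rnDeriv_lt_top σ ν).mono fun x hx =>
      (ENNReal.coe_toNNReal hx.ne).symm)
  have hgsing : Integrable g (σ.singularPart ν) :=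
    integrable_bdd hg.aestronglyMeasurable hM
  have hgw : Integrable g (ν.withDensity ρ) :=
    integrable_bdd hg.aestronglyMeasurable hM
  have hgν : Integrable g ν := integrable_bdd hg.aestronglyMeasurable hM
  have h1 : ∫ x, g x ∂σ = ∫ x, g x ∂(σ.singularPart ν) + ∫ x, g x ∂(ν.withDensity ρ) := by
    haveI : σ.HaveLebesgueDecomposition ν := Measure.haveLebesgueDecomposition_of_sigmaFinite σ ν
    conv_lhs => rw [σ.haveLebesgueDecomposition_add ν]
    exact integral_add_measure hgsing hgw
  have h2 : ∫ x, g x ∂(ν.withDensity ρ) = ∫ x, (ρ x).toReal * g x ∂ν := by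
    rw [hwd, integral_withDensity_eq_integral_smul hρm.ennreal_toNNReal g]
    rfl
  have hρi : Integrable (fun x => (ρ x).toReal) ν := Measure.integrable_toReal_rnDeriv
  have hρ1i : Integrable (fun x => |(ρ x).toReal - 1|) ν := (hρi.sub (integrable_const 1)).abs
  have hρgi : Integrable (fun x => (ρ x).toReal * g x) ν := by
    refine Integrable.mono' (hρi.mul_const M)
      ((hρm.ennreal_toReal.mul hg.measurable).aestronglyMeasurable) (ae_of_all _ fun x => ?_)
    rw [Real.norm_eq_abs, abs_mul]
    exact mul_le_mul_of_nonneg_left (hM x) (abs_nonneg _) |>.trans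
      (by rw [abs_of_nonneg ENNReal.toReal_nonneg])
  have h3 : ∫ x, (ρ x).toReal * g x ∂ν - ∫ x, g x ∂ν
      = ∫ x, ((ρ x).toReal - 1) * g x ∂ν := by
    rw [← integral_sub hρgi hgν]
    congr 1; funext x; ring
  have h4 : |∫ x, ((ρ x).toReal - 1) * g x ∂ν| ≤ M * ∫ x, |(ρ x).toReal - 1| ∂ν := by
    have hi : Integrable (fun x => ((ρ x).toReal - 1) * g x) ν := by
      have := hρgi.sub hgν
      refine this.congr (ae_of_all _ fun x => by simp [Pi.sub_apply]; ring)
    calc |∫ x, ((ρ x).toReal - 1) * g x ∂ν| ≤ ∫ x, |(ρ x).toReal - 1| * |g x| ∂ν := by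
          simpa [Real.norm_eq_abs, abs_mul] using norm_integral_le_integral_norm
            (fun x => ((ρ x).toReal - 1) * g x) (μ := ν)
      _ ≤ ∫ x, |(ρ x).toReal - 1| * M ∂ν := by
          refine integral_mono ?_ (hρ1i.mul_const M) fun x => ?_
          · exact (hi.abs.congr (ae_of_all _ fun x => by simp [abs_mul]))
          · exact mul_le_mul_of_nonneg_left (hM x) (abs_nonneg _)
      _ = M * ∫ x, |(ρ x).toReal - 1| ∂ν := by
          rw [integral_mul_const]; ring
  have h5 : |∫ x, g x ∂(σ.singularPart ν)| ≤ M * (σ.singularPart ν Set.univ).toReal := by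
    have := norm_integral_le_of_norm_le_const (μ := σ.singularPart ν) (f := g) (C := M)
      (ae_of_all _ fun x => by simpa using hM x)
    simpa [measureReal_def] using this
  have : ∫ x, g x ∂σ - ∫ x, g x ∂ν
      = (∫ x, ((ρ x).toReal - 1) * g x ∂ν) + ∫ x, g x ∂(σ.singularPart ν) := by
    rw [h1, h2, ← h3]; ring
  rw [this]
  calc |(∫ x, ((ρ x).toReal - 1) * g x ∂ν) + ∫ x, g x ∂(σ.singularPart ν)|
      ≤ |∫ x, ((ρ x).toReal - 1) * g x ∂ν| + |∫ x, g x ∂(σ.singularPart ν)| := abs_add_le _ _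
    _ ≤ M * (∫ x, |(ρ x).toReal - 1| ∂ν) + M * (σ.singularPart ν Set.univ).toReal :=
        add_le_add h4 h5
    _ = M * ((∫ x, |(ρ x).toReal - 1| ∂ν) + (σ.singularPart ν Set.univ).toReal) := by ring

end Aux4
section Aux5

variable {f : ℝ → ℝ≥0∞}

lemma conv_large (hf : IsEntropy f) {t : ℝ} (ht : 2 ≤ t) :
    ENNReal.ofReal (t - 1) * min (f 2) 1 ≤ f t := by
  have h1 : (1:ℝ) < t := by linarith
  have hne : t - 1 ≠ 0 := by linarith
  have key := hf.convex 1 t ((t-2)/(t-1)) (1/(t-1))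
    (div_nonneg (by linarith) (by linarith)) (div_nonneg zero_le_one (by linarith))
    (by field_simp; ring)
  have hx : (t-2)/(t-1) * 1 + 1/(t-1) * t = 2 := by field_simp; ring
  rw [hx, hf.one_eq_zero, mul_zero, zero_add] at key
  calc ENNReal.ofReal (t-1) * min (f 2) 1
      ≤ ENNReal.ofReal (t-1) * f 2 := mul_le_mul_right (min_le_left _ _) _
    _ ≤ ENNReal.ofReal (t-1) * (ENNReal.ofReal (1/(t-1)) * f t) := mul_le_mul_right key _
    _ = ENNReal.ofReal ((t-1) * (1/(t-1))) * f t := by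
        rw [← mul_assoc, ← ENNReal.ofReal_mul (by linarith)]
    _ = f t := by
        rw [mul_one_div, div_self (by linarith : t - 1 ≠ 0), ENNReal.ofReal_one, one_mul]

lemma conv_left (hf : IsEntropy f) {ε t : ℝ} (hε : 0 < ε) (ht : t ≤ 1 - ε) :
    f (1 - ε) ≤ f t := by
  have h1 : t < 1 := by linarith
  set a := ε / (1 - t) with ha
  have ha0 : 0 ≤ a := div_nonneg hε.le (by linarith)
  have ha1 : a ≤ 1 := (div_le_one (by linarith)).mpr (by linarith)
  have key := hf.convex t 1 a (1 - a) ha0 (by linarith) (by ring)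
  have hne : 1 - t ≠ 0 := by linarith
  have hx : a * t + (1 - a) * 1 = 1 - ε := by
    rw [ha]; field_simp; ring
  rw [hx, hf.one_eq_zero, mul_zero, add_zero] at key
  calc f (1 - ε) ≤ ENNReal.ofReal a * f t := key
    _ ≤ 1 * f t := mul_le_mul_left (ENNReal.ofReal_le_one.mpr ha1) _
    _ = f t := one_mul _

lemma conv_right (hf : IsEntropy f) {ε t : ℝ} (hε : 0 < ε) (ht : 1 + ε ≤ t) :
    f (1 + ε) ≤ f t := by
  have h1 : 1 < t := by linarith
  set b := ε / (t - 1) with hb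
  have hb0 : 0 ≤ b := div_nonneg hε.le (by linarith)
  have hb1 : b ≤ 1 := (div_le_one (by linarith)).mpr (by linarith)
  have key := hf.convex 1 t (1 - b) b (by linarith) hb0 (by ring)
  have hne : t - 1 ≠ 0 := by linarith
  have hx : (1 - b) * 1 + b * t = 1 + ε := by
    rw [hb]; field_simp; ring
  rw [hx, hf.one_eq_zero, mul_zero, zero_add] at key
  calc f (1 + ε) ≤ ENNReal.ofReal b * f t := key
    _ ≤ 1 * f t := mul_le_mul_left (ENNReal.ofReal_le_one.mpr hb1) _
    _ = f t := one_mul _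

lemma pointwise_bound (hf : IsEntropy f) (hmin : UniqueMinOne f) {ε : ℝ}
    (hε : 0 < ε) (hε1 : ε ≤ 1/2) :
    ∃ c : ℝ≥0∞, 0 < c ∧ c ≤ 1 ∧
      ∀ t : ℝ, 0 ≤ t → ENNReal.ofReal |t - 1| ≤ ENNReal.ofReal ε + c⁻¹ * f t := by
  set c := min (min (f (1-ε)) (f (1+ε))) (min (f 2) 1) with hc
  have hc1 : c ≤ 1 := le_trans (min_le_right _ _) (min_le_right _ _)
  have hctop : c ≠ ⊤ := (lt_of_le_of_lt hc1 (by norm_num)).ne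
  have hc0 : 0 < c := by
    refine lt_min (lt_min (hmin _ ?_) (hmin _ ?_)) (lt_min (hmin 2 (by norm_num)) one_pos)
      <;> intro h <;> nlinarith [h]
  refine ⟨c, hc0, hc1, fun t ht0 => ?_⟩
  rcases lt_or_ge |t-1| ε with h | h
  · exact le_trans (ENNReal.ofReal_le_ofReal h.le) le_self_add
  rcases le_or_gt t 2 with h2 | h2
  · have hft : c ≤ f t := by
      rcases le_or_gt t 1 with h1 | h1
      · have hne : ε ≤ 1 - t := by
          rw [abs_of_nonpos (by linarith)] at h; linarith
        exact le_trans (le_trans (min_le_left _ _) (min_le_left _ _))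
          (conv_left hf hε (by linarith))
      · have hne : 1 + ε ≤ t := by
          rw [abs_of_nonneg (by linarith)] at h; linarith
        exact le_trans (le_trans (min_le_left _ _) (min_le_right _ _))
          (conv_right hf hε hne)
    have habs : |t-1| ≤ 1 := abs_le.mpr ⟨by linarith, by linarith⟩
    calc ENNReal.ofReal |t-1| ≤ 1 := ENNReal.ofReal_le_one.mpr habs
      _ = c⁻¹ * c := (ENNReal.inv_mul_cancel hc0.ne' hctop).symm
      _ ≤ c⁻¹ * f t := mul_le_mul_right hft _
      _ ≤ ENNReal.ofReal ε + c⁻¹ * f t := le_add_self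
  · have hkey := conv_large hf h2.le
    have hmulc : ENNReal.ofReal (t-1) * c ≤ f t :=
      le_trans (mul_le_mul_right (min_le_right _ _) _) hkey
    have h4 : ENNReal.ofReal (t-1) ≤ c⁻¹ * f t := by
      calc ENNReal.ofReal (t-1) = ENNReal.ofReal (t-1) * (c * c⁻¹) := by
            rw [ENNReal.mul_inv_cancel hc0.ne' hctop, mul_one]
        _ = (ENNReal.ofReal (t-1) * c) * c⁻¹ := by ring
        _ ≤ f t * c⁻¹ := mul_le_mul_left hmulc _
        _ = c⁻¹ * f t := mul_comm _ _
    rw [abs_of_nonneg (by linarith)]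
    exact le_trans h4 le_add_self

lemma recession_pos (hf : IsEntropy f) (hmin : UniqueMinOne f) : 0 < recession f := by
  set c2 := min (f 2) 1 with hc2def
  have hc2 : 0 < c2 := lt_min (hmin 2 (by norm_num)) one_pos
  have hev : ∀ᶠ t in atTop, c2 * ENNReal.ofReal (1/2) ≤ f t / ENNReal.ofReal t := by
    filter_upwards [eventually_ge_atTop (2:ℝ)] with t ht
    have hkey := conv_large hf ht
    have h1 : ENNReal.ofReal (t/2) * c2 ≤ f t :=
      le_trans (mul_le_mul_left (ENNReal.ofReal_le_ofReal (by linarith)) _) hkey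
    calc c2 * ENNReal.ofReal (1/2) = c2 * (ENNReal.ofReal (t/2) / ENNReal.ofReal t) := by
          rw [← ENNReal.ofReal_div_of_pos (by linarith)]
          congr 2
          field_simp
        _ = (ENNReal.ofReal (t/2) * c2) / ENNReal.ofReal t := by
          simp only [div_eq_mul_inv]; ring
        _ ≤ f t / ENNReal.ofReal t := ENNReal.div_le_div_right h1 _
  have hle : c2 * ENNReal.ofReal (1/2) ≤ recession f :=
    le_limsup_of_frequently_le' hev.frequently
  exact lt_of_lt_of_le (ENNReal.mul_pos hc2.ne' (by simp)) hle

end Aux5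

set_option maxHeartbeats 2000000 in
/-- The MMD-regularized `f`-divergence is a divergence: it is nonnegative and vanishes
exactly on the diagonal. -/
theorem regFDiv_is_divergence {d : ℕ} (K : Rd d → Rd d → ℝ)
    (hK : IsKernel K) (hchar : Characteristic K)
    (f : ℝ → ℝ≥0∞) (hf : IsEntropy f) (hmin : UniqueMinOne f)
    (lam : ℝ) (hlam : 0 < lam)
    (μ ν : Measure (Rd d)) [IsFiniteMeasure μ] [IsFiniteMeasure ν] :
    0 ≤ regFDivM K f ν lam μ ∧ (regFDivM K f ν lam μ = 0 ↔ μ = ν) := by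
  obtain ⟨C, hC0, hCb⟩ := kernel_bd hK
  refine ⟨zero_le, ⟨fun h0 => ?_, fun heq => ?_⟩⟩
  · -- hard direction: vanishing regularized divergence forces `μ = ν`
    have hμm0 : 0 ≤ (μ Set.univ).toReal := ENNReal.toReal_nonneg
    have hνm0 : 0 ≤ (ν Set.univ).toReal := ENNReal.toReal_nonneg
    obtain ⟨A, hA⟩ : ∃ x, x = C * (2*(μ Set.univ).toReal + 2*(ν Set.univ).toReal + 1) + 1 := ⟨_, rfl⟩
    have hA0 : 0 < A := by rw [hA]; positivity
    have main : ∀ ε' : ℝ, 0 < ε' →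
        mmdSq K μ.toSignedMeasure ν.toSignedMeasure ≤ ε' := by
      intro ε' hε'
      -- constants
      obtain ⟨R', hR'def⟩ : ∃ x, x = min (recession f) 1 := ⟨_, rfl⟩
      have hR'0 : 0 < R' := by rw [hR'def]; exact lt_min (recession_pos hf hmin) one_pos
      have hR'top : R' ≠ ⊤ := by rw [hR'def]; exact ((min_le_right _ _).trans_lt ENNReal.one_lt_top).ne
      have hR'R : R' ≤ recession f := by rw [hR'def]; exact min_le_left _ _
      have hRt0 : 0 < R'.toReal := ENNReal.toReal_pos hR'0.ne' hR'top
      obtain ⟨η, hηdef⟩ : ∃ x, x = min 1 (ε'/(2*A)) := ⟨_, rfl⟩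
      have hη0 : 0 < η := by rw [hηdef]; exact lt_min one_pos (by positivity)
      have hη1 : η ≤ 1 := by rw [hηdef]; exact min_le_left _ _
      obtain ⟨ε0, hε0def⟩ : ∃ x, x = min (1/2 : ℝ) (η/(2*((ν Set.univ).toReal+1))) := ⟨_, rfl⟩
      have hε00 : 0 < ε0 := by rw [hε0def]; exact lt_min (by norm_num) (by positivity)
      have hε0h : ε0 ≤ 1/2 := by rw [hε0def]; exact min_le_left _ _
      obtain ⟨c, hc0, hc1, hpt⟩ := pointwise_bound hf hmin hε00 hε0h
      have hctop : c ≠ ⊤ := (hc1.trans_lt ENNReal.one_lt_top).ne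
      obtain ⟨W, hWdef⟩ : ∃ x, x = c⁻¹.toReal + 1/R'.toReal := ⟨_, rfl⟩
      have hW0 : 0 ≤ W := by rw [hWdef]; positivity
      obtain ⟨e, hedef⟩ : ∃ x, x = min (ε'/(4*lam)) (η/(2*(W+1))) := ⟨_, rfl⟩
      have he0 : 0 < e := by rw [hedef]; exact lt_min (by positivity) (by positivity)
      -- extract a near-optimal σ
      have hlt : regFDivM K f ν lam μ < ENNReal.ofReal e := by
        rw [h0]; exact ENNReal.ofReal_pos.mpr he0
      unfold regFDivM at hlt
      obtain ⟨⟨σ, hσfin⟩, hσ⟩ := iInf_lt_iff.mp hlt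
      have hL : fDiv f σ ν < ENNReal.ofReal e := lt_of_le_of_lt le_self_add hσ
      have hLtop : fDiv f σ ν ≠ ⊤ := (hL.trans ENNReal.ofReal_lt_top).ne
      have hQ : ENNReal.ofReal (mmdSqM K μ σ / (2*lam)) < ENNReal.ofReal e :=
        lt_of_le_of_lt le_add_self hσ
      have hQ3 : mmdSqM K μ σ ≤ ε'/2 := by
        have h1 := (ENNReal.ofReal_lt_ofReal_iff he0).mp hQ
        have h2l : (0:ℝ) < 2*lam := by linarith
        rw [div_lt_iff₀ h2l] at h1
        have h2 : e ≤ ε'/(4*lam) := by rw [hedef]; exact min_le_left _ _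
        rw [le_div_iff₀ (by linarith)] at h2
        nlinarith
      -- fDiv components
      have hfd : fDiv f σ ν
          = ∫⁻ x, f ((σ.rnDeriv ν x).toReal) ∂ν
            + recession f * σ.singularPart ν Set.univ := rfl
      have hIle : ∫⁻ x, f ((σ.rnDeriv ν x).toReal) ∂ν ≤ fDiv f σ ν := by
        rw [hfd]; exact le_self_add
      have hs_le : σ.singularPart ν Set.univ ≤ fDiv f σ ν / R' := by
        rw [ENNReal.le_div_iff_mul_le (Or.inl hR'0.ne') (Or.inl hR'top)]
        calc σ.singularPart ν Set.univ * R' = R' * σ.singularPart ν Set.univ := mul_comm _ _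
          _ ≤ recession f * σ.singularPart ν Set.univ := mul_le_mul_left hR'R _
          _ ≤ fDiv f σ ν := by rw [hfd]; exact le_add_self
      -- lintegral bound on the density deviation
      have hρm : Measurable (fun x => (σ.rnDeriv ν x).toReal) :=
        (Measure.measurable_rnDeriv σ ν).ennreal_toReal
      have hfρm : Measurable (fun x => f ((σ.rnDeriv ν x).toReal)) :=
        hf.lsc.measurable.comp hρm
      have hΔ : ∫⁻ x, ENNReal.ofReal |(σ.rnDeriv ν x).toReal - 1| ∂ν
          ≤ ENNReal.ofReal ε0 * ν Set.univ + c⁻¹ * fDiv f σ ν := by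
        calc ∫⁻ x, ENNReal.ofReal |(σ.rnDeriv ν x).toReal - 1| ∂ν
            ≤ ∫⁻ x, (ENNReal.ofReal ε0 + c⁻¹ * f ((σ.rnDeriv ν x).toReal)) ∂ν :=
              lintegral_mono fun x => hpt _ ENNReal.toReal_nonneg
          _ = ENNReal.ofReal ε0 * ν Set.univ
              + c⁻¹ * ∫⁻ x, f ((σ.rnDeriv ν x).toReal) ∂ν := by
              rw [lintegral_add_left measurable_const, lintegral_const,
                lintegral_const_mul _ hfρm]
          _ ≤ _ := add_le_add_right (mul_le_mul_right hIle _) _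
      -- the real-valued total deviation δ
      obtain ⟨δ, hδdef⟩ : ∃ x, x = (∫ x, |(σ.rnDeriv ν x).toReal - 1| ∂ν)
        + (σ.singularPart ν Set.univ).toReal := ⟨_, rfl⟩
      have hδ0 : 0 ≤ δ := by
        rw [hδdef]
        exact add_nonneg (integral_nonneg fun x => abs_nonneg _) ENNReal.toReal_nonneg
      have hδle : δ ≤ η := by
        have hint_eq : ∫ x, |(σ.rnDeriv ν x).toReal - 1| ∂ν
            = (∫⁻ x, ENNReal.ofReal |(σ.rnDeriv ν x).toReal - 1| ∂ν).toReal :=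
          integral_eq_lintegral_of_nonneg_ae (ae_of_all _ fun x => abs_nonneg _)
            ((hρm.sub measurable_const).abs).aestronglyMeasurable
        have hRHS_ne : ENNReal.ofReal ε0 * ν Set.univ + c⁻¹ * fDiv f σ ν ≠ ⊤ :=
          ENNReal.add_ne_top.mpr
            ⟨ENNReal.mul_ne_top ENNReal.ofReal_ne_top (measure_ne_top _ _),
             ENNReal.mul_ne_top (ENNReal.inv_ne_top.mpr hc0.ne') hLtop⟩
        have h6 : ∫ x, |(σ.rnDeriv ν x).toReal - 1| ∂ν
            ≤ (ENNReal.ofReal ε0 * ν Set.univ + c⁻¹ * fDiv f σ ν).toReal := by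
          rw [hint_eq]; exact ENNReal.toReal_mono hRHS_ne hΔ
        have hLe : (fDiv f σ ν).toReal ≤ e := by
          have h5 := ENNReal.toReal_mono ENNReal.ofReal_ne_top hL.le
          rwa [ENNReal.toReal_ofReal he0.le] at h5
        have h7 : (ENNReal.ofReal ε0 * ν Set.univ + c⁻¹ * fDiv f σ ν).toReal
            = ε0 * (ν Set.univ).toReal + c⁻¹.toReal * (fDiv f σ ν).toReal := by
          rw [ENNReal.toReal_add
              (ENNReal.mul_ne_top ENNReal.ofReal_ne_top (measure_ne_top _ _))
              (ENNReal.mul_ne_top (ENNReal.inv_ne_top.mpr hc0.ne') hLtop),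
            ENNReal.toReal_mul, ENNReal.toReal_mul, ENNReal.toReal_ofReal hε00.le]
        have h8 : (σ.singularPart ν Set.univ).toReal ≤ e / R'.toReal := by
          have h9 : (σ.singularPart ν Set.univ).toReal ≤ (fDiv f σ ν / R').toReal :=
            ENNReal.toReal_mono ((ENNReal.div_lt_top hLtop hR'0.ne').ne) hs_le
          rw [ENNReal.toReal_div] at h9
          refine h9.trans ?_
          gcongr
        have hcinv0 : (0:ℝ) ≤ c⁻¹.toReal := ENNReal.toReal_nonneg
        have hδb : δ ≤ ε0 * (ν Set.univ).toReal + c⁻¹.toReal * e + e / R'.toReal := by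
          have h10 : c⁻¹.toReal * (fDiv f σ ν).toReal ≤ c⁻¹.toReal * e :=
            mul_le_mul_of_nonneg_left hLe hcinv0
          rw [hδdef]
          have h11 := h6.trans_eq h7
          linarith
        have he1 : e ≤ η/(2*(W+1)) := by rw [hedef]; exact min_le_right _ _
        have hε01 : ε0 ≤ η/(2*((ν Set.univ).toReal+1)) := by rw [hε0def]; exact min_le_right _ _
        have hterm : c⁻¹.toReal * e + e / R'.toReal = W * e := by
          rw [hWdef]; field_simp
        have hWe : W * e ≤ η/2 := by
          have h10 : W * e ≤ W * (η/(2*(W+1))) := mul_le_mul_of_nonneg_left he1 hW0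
          have h11 : W * (η/(2*(W+1))) ≤ η/2 := by
            rw [← mul_div_assoc, div_le_div_iff₀ (by positivity) (by norm_num)]
            nlinarith
          linarith
        have hε0νm : ε0 * (ν Set.univ).toReal ≤ η/2 := by
          have h12 : ε0 * (ν Set.univ).toReal
              ≤ (η/(2*((ν Set.univ).toReal+1))) * (ν Set.univ).toReal :=
            mul_le_mul_of_nonneg_right hε01 hνm0
          have h13 : (η/(2*((ν Set.univ).toReal+1))) * (ν Set.univ).toReal ≤ η/2 := by
            rw [div_mul_eq_mul_div, div_le_div_iff₀ (by positivity) (by norm_num)]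
            nlinarith
          linarith
        linarith
      -- kernel mean-embedding estimates
      have hmean : ∀ x : Rd d, |(∫ y, K x y ∂σ) - ∫ y, K x y ∂ν| ≤ C * δ := fun x => by
        have h14 := integral_sub_le σ ν (hK.cont x).stronglyMeasurable hC0 (hCb x)
        rw [hδdef]
        exact h14
      have hσm : (σ Set.univ).toReal ≤ (ν Set.univ).toReal + δ := by
        have h1 := integral_sub_le σ ν
          (stronglyMeasurable_const : StronglyMeasurable fun _ : Rd d => (1:ℝ))
          zero_le_one (fun x => by norm_num)
        simp only [integral_const, smul_eq_mul, mul_one, one_mul, measureReal_def] at h1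
        rw [← hδdef] at h1
        have h2 := abs_le.mp h1
        linarith [h2.1, h2.2]
      have hiσμ : Integrable (fun x => ∫ y, K x y ∂σ) μ :=
        integrable_bdd (kernel_int_sm hK σ).aestronglyMeasurable (kernel_int_bd hK hCb σ)
      have hiνμ : Integrable (fun x => ∫ y, K x y ∂ν) μ :=
        integrable_bdd (kernel_int_sm hK ν).aestronglyMeasurable (kernel_int_bd hK hCb ν)
      have hiσν : Integrable (fun x => ∫ y, K x y ∂σ) ν :=
        integrable_bdd (kernel_int_sm hK σ).aestronglyMeasurable (kernel_int_bd hK hCb σ)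
      have hiνν : Integrable (fun x => ∫ y, K x y ∂ν) ν :=
        integrable_bdd (kernel_int_sm hK ν).aestronglyMeasurable (kernel_int_bd hK hCb ν)
      have hEμ : |(∫ x, (∫ y, K x y ∂σ) ∂μ) - ∫ x, (∫ y, K x y ∂ν) ∂μ|
          ≤ (C*δ) * (μ Set.univ).toReal := by
        rw [← integral_sub hiσμ hiνμ]
        have h15 := norm_integral_le_of_norm_le_const (μ := μ)
          (f := fun x => (∫ y, K x y ∂σ) - ∫ y, K x y ∂ν) (C := C*δ)
          (ae_of_all _ fun x => by rw [Real.norm_eq_abs]; exact hmean x)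
        rwa [Real.norm_eq_abs] at h15
      have hEν : |(∫ x, (∫ y, K x y ∂σ) ∂ν) - ∫ x, (∫ y, K x y ∂ν) ∂ν|
          ≤ (C*δ) * (ν Set.univ).toReal := by
        rw [← integral_sub hiσν hiνν]
        have h15 := norm_integral_le_of_norm_le_const (μ := ν)
          (f := fun x => (∫ y, K x y ∂σ) - ∫ y, K x y ∂ν) (C := C*δ)
          (ae_of_all _ fun x => by rw [Real.norm_eq_abs]; exact hmean x)
        rwa [Real.norm_eq_abs] at h15
      have hE2 : |(∫ x, (∫ y, K x y ∂σ) ∂σ) - ∫ x, (∫ y, K x y ∂σ) ∂ν|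
          ≤ (C * (σ Set.univ).toReal) * δ := by
        have h16 := integral_sub_le σ ν (kernel_int_sm hK σ)
          (mul_nonneg hC0 ENNReal.toReal_nonneg) (kernel_int_bd hK hCb σ)
        rw [hδdef]
        exact h16
      have hsqeq : mmdSq K μ.toSignedMeasure ν.toSignedMeasure = mmdSqM K μ ν :=
        mmdSq_eq hK hCb μ ν
      have hAη : A * η ≤ ε'/2 := by
        have h17 : η ≤ ε'/(2*A) := by rw [hηdef]; exact min_le_right _ _
        calc A * η ≤ A * (ε'/(2*A)) := mul_le_mul_of_nonneg_left h17 hA0.le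
          _ = ε'/2 := by field_simp
      rw [hsqeq]
      unfold mmdSqM at hQ3 ⊢
      have h21 := abs_le.mp hEμ
      have h22 := abs_le.mp hEν
      have h23 := abs_le.mp hE2
      have hδ1 : δ ≤ 1 := hδle.trans hη1
      have hAδ : A * δ ≤ A * η := mul_le_mul_of_nonneg_left hδle hA0.le
      have hCδ : 0 ≤ C * δ := mul_nonneg hC0 hδ0
      have hstep : (C * (σ Set.univ).toReal) * δ
          ≤ C * ((ν Set.univ).toReal + δ) * δ := by nlinarith
      nlinarith [h21.1, h21.2, h22.1, h22.2, h23.1, h23.2, hstep, hAδ, hAη, hδ1, hδ0, hC0,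
        mul_nonneg hC0 hδ0]
    have hle0 : mmdSq K μ.toSignedMeasure ν.toSignedMeasure ≤ 0 := by
      by_contra h
      push_neg at h
      have h18 := main (mmdSq K μ.toSignedMeasure ν.toSignedMeasure / 2) (by linarith)
      linarith
    have hmmd : mmd K μ.toSignedMeasure ν.toSignedMeasure = 0 :=
      Real.sqrt_eq_zero'.mpr hle0
    exact Measure.toSignedMeasure_eq_toSignedMeasure_iff.mp (hchar _ _ hmmd)
  · -- easy direction
    subst heq
    refine le_antisymm ?_ zero_le
    have h1 : fDiv f μ μ = 0 := by
      have e1 : ∫⁻ x, f ((μ.rnDeriv μ x).toReal) ∂μ = 0 := by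
        have heq2 : (fun x => f ((μ.rnDeriv μ x).toReal)) =ᵐ[μ] fun _ => 0 := by
          filter_upwards [Measure.rnDeriv_self μ] with x hx
          simp [hx, hf.one_eq_zero]
        rw [lintegral_congr_ae heq2, lintegral_zero]
      unfold fDiv
      rw [e1, Measure.singularPart_self]
      simp
    have h2 : mmdSqM K μ μ = 0 := by unfold mmdSqM; ring
    have h3 : regFDivM K f μ lam μ ≤ fDiv f μ μ + ENNReal.ofReal (mmdSqM K μ μ / (2 * lam)) :=
      iInf_le _ (⟨μ, inferInstance⟩ : {σ : Measure (Rd d) // IsFiniteMeasure σ})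
    rw [h1, h2] at h3
    simpa using h3
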